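/- Greedy search under denoising-based intervention recovers exactly one edge of an AND gate, namely the last one processed: let n ≥ 1 and define assignments x^{(0)}, …, x^{(n)} : Fin n → Bool by x^{(0)} = all-false and, for each step i = 1, …, n, letting y = Function.update x^{(i−1)} i true, set x^{(i)} = y if ⋀_j y j = ⋀_j x^{(i−1)} j (edge i is removed, keeping the clean activation true) and x^{(i)} = x^{(i−1)} otherwise (edge i is retained, reverting to the corrupted activation false). Then the set of retained edges is exactly the singleton {n}: x^{(n)} i = true for all i < n and x^{(n)} n = false. -/

import Mathlib

/-- Greedy denoising-based search on an AND gate with `n ≥ 1` senders,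
processing edges in order, starts from the all-false (corrupted) assignment, tentatively
restores each edge to `true`, keeps the restoration if the AND output is unchanged (edge
removed, clean activation kept) and reverts to `false` otherwise (edge retained). The
final retained set is exactly the last edge: all coordinates before the last are `true`
and the last coordinate is `false`. -/
theorem stmt_16 (n : ℕ) (hn : 1 ≤ n)
    (AND : (Fin n → Bool) → Bool) (hAND : ∀ x, AND x = decide (∀ j, x j = true))
    (x : ℕ → Fin n → Bool)
    (h0 : x 0 = fun _ => false)
    (hstep : ∀ i : Fin n,
      x (i.val + 1) =
        if AND (Function.update (x i.val) i true) = AND (x i.val)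
        then Function.update (x i.val) i true
        else x i.val) :
    (∀ i : Fin n, i.val + 1 < n → x n i = true) ∧
    x n ⟨n - 1, by omega⟩ = false := by
  set w : Fin n := ⟨n - 1, by omega⟩ with hw
  have hx : ∀ k, k ≤ n - 1 → x k = fun j => decide (j.val < k) := by
    intro k
    induction k with
    | zero =>
      intro _
      rw [h0]; funext j; simp
    | succ k ih =>
      intro hk
      have hxk := ih (by omega)
      have hlt : k < n := by omega
      have hstepk := hstep ⟨k, hlt⟩
      simp only [hAND] at hstepk
      have h1 : x k w = false := by rw [hxk]; simp [hw]; omega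
      have hne : w ≠ ⟨k, hlt⟩ := by
        intro h
        have := congrArg Fin.val h
        simp [hw] at this
        omega
      have h2 : Function.update (x k) ⟨k, hlt⟩ true w = false := by
        rw [Function.update_apply, if_neg hne, h1]
      have hc1 : ¬ ∀ j : Fin n, Function.update (x k) ⟨k, hlt⟩ true j = true := by
        intro h; have := h w; rw [h2] at this; exact Bool.false_ne_true this
      have hc2 : ¬ ∀ j : Fin n, x k j = true := by
        intro h; have := h w; rw [h1] at this; exact Bool.false_ne_true this
      rw [if_pos (by simp [hc1, hc2])] at hstepk
      rw [hstepk, hxk]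
      funext j
      rw [Function.update_apply]
      by_cases hj : j = ⟨k, hlt⟩
      · subst hj; simp
      · rw [if_neg hj]
        have : j.val ≠ k := fun h => hj (Fin.ext h)
        by_cases hjk : j.val < k
        · simp [hjk]; omega
        · simp [hjk]; omega
  have hxn1 : x (n - 1) = fun j => decide (j.val < n - 1) := hx (n - 1) le_rfl
  have hstepl := hstep w
  simp only [hAND, hw] at hstepl
  have hall : ∀ j : Fin n, Function.update (x (n - 1)) w true j = true := by
    intro j
    rw [Function.update_apply]
    by_cases hj : j = w
    · simp [hj]
    · rw [if_neg hj, hxn1]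
      have : j.val ≠ n - 1 := fun h => hj (Fin.ext h)
      have : j.val < n - 1 := by omega
      simp [this]
  have hnotall : ¬ ∀ j : Fin n, x (n - 1) j = true := by
    intro h
    have := h w
    rw [hxn1] at this
    simp [hw] at this
  rw [if_neg (by simp [hw] at hall hnotall ⊢; simp [hall, hnotall])] at hstepl
  have hfin : x n = fun j => decide (j.val < n - 1) := by
    have : n - 1 + 1 = n := by omega
    rw [this] at hstepl
    rw [hstepl, hxn1]
  constructor
  · intro i hi
    rw [hfin]
    simp; omega
  · rw [hfin]; simp; show n ≤ n - 1 + 1; omega
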